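/- Under the hypotheses that ψ₀' ∈ L²(ℝ) and π₀ ∈ L¹(ℝ) ∩ L²(ℝ), the time derivative of the d'Alembert solution, ∂ₜψ(x,t) = (ψ₀'(x+t) − ψ₀'(x−t))/2 + (π₀(x+t)+π₀(x−t))/2, converges to 0 in L²(−R,R) for every R > 0 as t → +∞. -/

import Mathlib

open MeasureTheory Filter intervalIntegral

/-- the time derivative of the d'Alembert solution,
`∂ₜψ(x,t) = (ψ₀'(x+t) − ψ₀'(x−t))/2 + (π₀(x+t)+π₀(x−t))/2`,
converges to `0` in `L²(−R,R)` for every `R > 0` as `t → +∞`. -/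
theorem dAlembert_velocity_tendsto_zero
    (ψ₀ π₀ : ℝ → ℝ)
    (hψ₀ : Differentiable ℝ ψ₀)
    (hψ₀' : MemLp (deriv ψ₀) 2 (volume : Measure ℝ))
    (hπ₀L1 : Integrable π₀ (volume : Measure ℝ))
    (hπ₀L2 : MemLp π₀ 2 (volume : Measure ℝ)) :
    ∀ R > 0,
      Tendsto
        (fun t : ℝ => ∫ x in (-R : ℝ)..R,
          ((deriv ψ₀ (x + t) - deriv ψ₀ (x - t)) / 2
            + (π₀ (x + t) + π₀ (x - t)) / 2) ^ 2)
        atTop (nhds 0) := by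
  intro R hR
  set F : ℝ → ℝ := fun x => (deriv ψ₀ x) ^ 2 + (π₀ x) ^ 2 with hFdef
  have hFnonneg : ∀ x, 0 ≤ F x := fun x => by positivity
  have hFint : Integrable F (volume : Measure ℝ) :=
    hψ₀'.integrable_sq.add hπ₀L2.integrable_sq
  -- shifts of F are integrable
  have hFshift : ∀ t : ℝ, Integrable (fun x => F (x + t)) (volume : Measure ℝ) := by
    intro t
    exact ((measurePreserving_add_right (volume : Measure ℝ) t).integrable_comp
      hFint.aestronglyMeasurable).2 hFint
  have hFshift' : ∀ t : ℝ, Integrable (fun x => F (x - t)) (volume : Measure ℝ) := by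
    intro t
    simpa [sub_eq_add_neg] using hFshift (-t)
  -- the integrand and its pointwise bound
  set g : ℝ → ℝ → ℝ := fun t x =>
    ((deriv ψ₀ (x + t) - deriv ψ₀ (x - t)) / 2 + (π₀ (x + t) + π₀ (x - t)) / 2) ^ 2 with hgdef
  have hpt : ∀ t x, g t x ≤ F (x + t) + F (x - t) := by
    intro t x
    simp only [hgdef, hFdef]
    nlinarith [sq_nonneg (deriv ψ₀ (x + t) + deriv ψ₀ (x - t)),
      sq_nonneg (π₀ (x + t) - π₀ (x - t)),
      sq_nonneg (deriv ψ₀ (x + t) - deriv ψ₀ (x - t) - π₀ (x + t) - π₀ (x - t))]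
  have hgnonneg : ∀ t x, 0 ≤ g t x := fun t x => by positivity
  -- measurability of the integrand
  have hgmeas : ∀ t : ℝ, AEStronglyMeasurable (g t) (volume : Measure ℝ) := by
    intro t
    have hd : Measurable (deriv ψ₀) := measurable_deriv ψ₀
    have h1 : AEStronglyMeasurable (fun x => deriv ψ₀ (x + t)) (volume : Measure ℝ) :=
      (hd.comp (measurable_id.add_const t)).aestronglyMeasurable
    have h2 : AEStronglyMeasurable (fun x => deriv ψ₀ (x - t)) (volume : Measure ℝ) :=
      (hd.comp (measurable_id.sub_const t)).aestronglyMeasurable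
    have h3 : AEStronglyMeasurable (fun x => π₀ (x + t)) (volume : Measure ℝ) :=
      hπ₀L1.aestronglyMeasurable.comp_measurePreserving
        (measurePreserving_add_right (volume : Measure ℝ) t)
    have h4 : AEStronglyMeasurable (fun x => π₀ (x - t)) (volume : Measure ℝ) := by
      have := hπ₀L1.aestronglyMeasurable.comp_measurePreserving
        (measurePreserving_add_right (volume : Measure ℝ) (-t))
      simpa [sub_eq_add_neg, Function.comp_def] using this
    have : AEStronglyMeasurable (fun x =>
        ((deriv ψ₀ (x + t) - deriv ψ₀ (x - t)) * (1/2)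
          + (π₀ (x + t) + π₀ (x - t)) * (1/2)) ^ 2) (volume : Measure ℝ) :=
      (((h1.sub h2).mul_const (1/2)).add ((h3.add h4).mul_const (1/2))).pow 2
    refine this.congr (ae_of_all _ fun x => ?_)
    simp only [hgdef]
    ring
  -- integrability of the integrand
  have hgint : ∀ t : ℝ, Integrable (g t) (volume : Measure ℝ) := by
    intro t
    have hbint : Integrable (fun x => F (x + t) + F (x - t)) (volume : Measure ℝ) :=
      (hFshift t).add (hFshift' t)
    refine hbint.mono' (hgmeas t) (ae_of_all _ fun x => ?_)
    rw [Real.norm_eq_abs, abs_of_nonneg (hgnonneg t x)]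
    exact hpt t x
  -- the bounding interval integrals
  have hRle : (-R : ℝ) ≤ R := by linarith
  -- G a = ∫ x in Iic a, F x
  set G : ℝ → ℝ := fun a => ∫ x in Set.Iic a, F x with hGdef
  have hinterval : ∀ a b : ℝ, (∫ x in a..b, F x) = G b - G a := by
    intro a b
    rw [← integral_Iic_sub_Iic (hFint.integrableOn) (hFint.integrableOn)]
  -- G tends to a limit at atTop
  have hGtop : Tendsto G atTop (nhds (G 0 + ∫ x in Set.Ioi (0:ℝ), F x)) := by
    have h := intervalIntegral_tendsto_integral_Ioi (0 : ℝ)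
      (hFint.integrableOn) (tendsto_id (α := ℝ))
    simp only [id_eq] at h
    exact (tendsto_const_nhds.add h).congr (fun a => by rw [hinterval 0 a]; ring)
  have hGbot : Tendsto G atBot (nhds 0) := by
    have h := intervalIntegral_tendsto_integral_Iic (0 : ℝ)
      (hFint.integrableOn) (tendsto_id (α := ℝ))
    have key : Tendsto (fun a : ℝ => G 0 - ∫ x in a..(0:ℝ), F x) atBot
        (nhds (G 0 - G 0)) := by
      simp only [id_eq] at h
      exact tendsto_const_nhds.sub h
    rw [sub_self] at key
    exact key.congr (fun a => by rw [hinterval a 0]; ring)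
  -- the bound tends to 0
  set B : ℝ → ℝ := fun t => (G (R + t) - G (-R + t)) + (G (R - t) - G (-R - t)) with hBdef
  have hBtendsto : Tendsto B atTop (nhds 0) := by
    have h1 : Tendsto (fun t : ℝ => R + t) atTop atTop :=
      tendsto_atTop_add_const_left _ R tendsto_id
    have h2 : Tendsto (fun t : ℝ => -R + t) atTop atTop :=
      tendsto_atTop_add_const_left _ (-R) tendsto_id
    have h3 : Tendsto (fun t : ℝ => R - t) atTop atBot :=
      tendsto_atBot_add_const_left _ R tendsto_neg_atTop_atBot
    have h4 : Tendsto (fun t : ℝ => -R - t) atTop atBot :=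
      tendsto_atBot_add_const_left _ (-R) tendsto_neg_atTop_atBot
    have := (((hGtop.comp h1).sub (hGtop.comp h2)).add
      ((hGbot.comp h3).sub (hGbot.comp h4)))
    simpa [hBdef, Function.comp, sub_eq_add_neg] using this
  -- squeeze
  refine squeeze_zero (fun t => ?_) (fun t => ?_) hBtendsto
  · exact intervalIntegral.integral_nonneg hRle (fun x _ => hgnonneg t x)
  · -- ∫ g t ≤ ∫ bound = B t
    have hmono : (∫ x in (-R : ℝ)..R, g t x)
        ≤ ∫ x in (-R : ℝ)..R, (F (x + t) + F (x - t)) := by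
      apply intervalIntegral.integral_mono_on hRle
        ((hgint t).intervalIntegrable)
        (((hFshift t).add (hFshift' t) : Integrable (fun x => F (x + t) + F (x - t))
          (volume : Measure ℝ)).intervalIntegrable)
      intro x _
      exact hpt t x
    have hsplit : (∫ x in (-R : ℝ)..R, (F (x + t) + F (x - t)))
        = (∫ x in (-R : ℝ)..R, F (x + t)) + ∫ x in (-R : ℝ)..R, F (x - t) :=
      intervalIntegral.integral_add ((hFshift t).intervalIntegrable)
        ((hFshift' t).intervalIntegrable)
    have h1 : (∫ x in (-R : ℝ)..R, F (x + t)) = G (R + t) - G (-R + t) := by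
      rw [intervalIntegral.integral_comp_add_right, hinterval]
    have h2 : (∫ x in (-R : ℝ)..R, F (x - t)) = G (R - t) - G (-R - t) := by
      rw [intervalIntegral.integral_comp_sub_right, hinterval]
    calc (∫ x in (-R : ℝ)..R, g t x)
        ≤ (∫ x in (-R : ℝ)..R, F (x + t)) + ∫ x in (-R : ℝ)..R, F (x - t) := by
          rw [← hsplit]; exact hmono
      _ = B t := by rw [h1, h2]
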